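/- Let X be a zero-dimensional compact Hausdorff space. The map h ↦ h^st, where h^st(A) = h[A] for each clopen A ⊆ X, is a homeomorphism from H(X) (with the compact-open topology) onto the group Aut(clop(X)) of Boolean-algebra automorphisms of the Boolean algebra of clopen subsets of X, where Aut(clop(X)) carries the topology of pointwise convergence, i.e., the topology generated by the sets {φ ∈ Aut(clop(X)) : φ(a) = b} for clopen a, b ⊆ X. -/

import Mathlib

open Set TopologicalSpace

noncomputable section

/-- The compact-open topology on the group `H(X)` of self-homeomorphisms of `X`,
generated by the sets `V(K,U) = {h : h[K] ⊆ U}` for `K` compact and `U` open. -/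
instance homeoCO {X : Type*} [TopologicalSpace X] : TopologicalSpace (X ≃ₜ X) :=
  TopologicalSpace.generateFrom
    {S : Set (X ≃ₜ X) | ∃ K U : Set X, IsCompact K ∧ IsOpen U ∧
      S = {h : X ≃ₜ X | ∀ x ∈ K, h x ∈ U}}

/-- The topology of pointwise convergence on the automorphism group of the Boolean
algebra of clopen subsets of `X`, generated by the sets `{φ : φ(a) = b}`. -/
instance autClopensTop {X : Type*} [TopologicalSpace X] :
    TopologicalSpace (Clopens X ≃o Clopens X) :=
  TopologicalSpace.generateFrom
    {S : Set (Clopens X ≃o Clopens X) | ∃ a b : Clopens X,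
      S = {φ : Clopens X ≃o Clopens X | φ a = b}}

/-- The dual map `h ↦ h^st` sending a self-homeomorphism of `X` to the induced
automorphism `A ↦ h[A]` of the Boolean algebra of clopen sets of `X`. -/
def stMap {X : Type*} [TopologicalSpace X] (h : X ≃ₜ X) :
    Clopens X ≃o Clopens X where
  toFun A := ⟨⇑h '' (A : Set X), by
    rw [show ⇑h '' (A : Set X) = ⇑h.symm ⁻¹' (A : Set X) from
      h.toEquiv.image_eq_preimage_symm (A : Set X)]
    exact A.2.preimage h.symm.continuous⟩
  invFun B := ⟨⇑h.symm '' (B : Set X), by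
    rw [show ⇑h.symm '' (B : Set X) = ⇑h ⁻¹' (B : Set X) from
      h.symm.toEquiv.image_eq_preimage_symm (B : Set X)]
    exact B.2.preimage h.continuous⟩
  left_inv A := by ext x; simp
  right_inv B := by ext x; simp
  map_rel_iff' {A B} := by
    simp only [Equiv.coe_fn_mk, ← SetLike.coe_subset_coe]
    exact Set.image_subset_image_iff h.injective

section Aux

lemma orderIso_map_compl {α β : Type*} [BooleanAlgebra α] [BooleanAlgebra β]
    (f : α ≃o β) (a : α) : f aᶜ = (f a)ᶜ :=
  ((f.isCompl isCompl_compl).compl_eq).symm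

lemma stMap_coe {X : Type*} [TopologicalSpace X] (h : X ≃ₜ X) (A : Clopens X) :
    ((stMap h A : Clopens X) : Set X) = ⇑h '' (A : Set X) := rfl

variable {X : Type*} [TopologicalSpace X] [CompactSpace X] [T2Space X]
  [TotallyDisconnectedSpace X]

lemma eq_of_mem_clopens {a b : X} (h : ∀ U : Clopens X, a ∈ U ↔ b ∈ U) : a = b := by
  by_contra hne
  obtain ⟨U, hU, haU, hbU⟩ := exists_isClopen_of_totally_separated hne
  exact hbU ((h ⟨U, hU⟩).mp haU)

lemma mem_clopens_compl {x : X} {A : Clopens X} : x ∈ Aᶜ ↔ x ∉ A := Iff.rfl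

variable (φ : Clopens X ≃o Clopens X)

lemma stInv_exists (x : X) : ∃ y : X, ∀ A : Clopens X, x ∈ A → y ∈ φ A := by
  have hne : Nonempty {A : Clopens X // x ∈ A} := ⟨⟨⊤, mem_univ x⟩⟩
  have key := IsCompact.nonempty_iInter_of_directed_nonempty_isCompact_isClosed
    (fun A : {A : Clopens X // x ∈ A} => (φ A.1 : Set X))
    (fun A B => ⟨⟨A.1 ⊓ B.1, ⟨A.2, B.2⟩⟩,
      SetLike.coe_subset_coe.mpr (φ.monotone inf_le_left),
      SetLike.coe_subset_coe.mpr (φ.monotone inf_le_right)⟩)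
    (fun A => by
      rw [Set.nonempty_iff_ne_empty]
      intro hempty
      have : φ A.1 = ⊥ := SetLike.coe_injective hempty
      have hA : A.1 = ⊥ := φ.injective (by rw [this, map_bot])
      have h2 := A.2
      rw [hA] at h2
      rw [← SetLike.mem_coe, Clopens.coe_bot] at h2
      exact (Set.mem_empty_iff_false x).mp h2)
    (fun A => (φ A.1).2.isClosed.isCompact)
    (fun A => (φ A.1).2.isClosed)
  obtain ⟨y, hy⟩ := key
  exact ⟨y, fun A hA => mem_iInter.mp hy ⟨A, hA⟩⟩

/-- The point dual to `x` under the automorphism `φ`. -/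
def stInv (x : X) : X := (stInv_exists φ x).choose

lemma stInv_mem {x : X} {A : Clopens X} (hx : x ∈ A) : stInv φ x ∈ φ A :=
  (stInv_exists φ x).choose_spec A hx

lemma stInv_mem_iff (x : X) (A : Clopens X) : stInv φ x ∈ φ A ↔ x ∈ A := by
  refine ⟨fun h => ?_, stInv_mem φ⟩
  by_contra hx
  have h2 : stInv φ x ∈ φ Aᶜ := stInv_mem φ (mem_clopens_compl.mpr hx)
  rw [orderIso_map_compl] at h2
  exact mem_clopens_compl.mp h2 h

lemma stInv_symm_apply (x : X) : stInv φ.symm (stInv φ x) = x := by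
  refine eq_of_mem_clopens fun B => ?_
  have h1 : stInv φ.symm (stInv φ x) ∈ φ.symm (φ B) ↔ stInv φ x ∈ φ B :=
    stInv_mem_iff φ.symm (stInv φ x) (φ B)
  rw [φ.symm_apply_apply] at h1
  rw [h1, stInv_mem_iff]

lemma stInv_continuous : Continuous (stInv φ) := by
  rw [isTopologicalBasis_isClopen.continuous_iff]
  intro s hs
  have hpre : stInv φ ⁻¹' s = ((φ.symm ⟨s, hs⟩ : Clopens X) : Set X) := by
    ext x
    have := stInv_mem_iff φ x (φ.symm ⟨s, hs⟩)
    rw [φ.apply_symm_apply] at this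
    simpa using this
  rw [hpre]
  exact (φ.symm ⟨s, hs⟩).2.isOpen

/-- The homeomorphism of `X` dual to an automorphism of the clopen algebra. -/
def stHomeo : X ≃ₜ X where
  toFun := stInv φ
  invFun := stInv φ.symm
  left_inv := stInv_symm_apply φ
  right_inv x := by
    have := stInv_symm_apply φ.symm x
    rwa [OrderIso.symm_symm] at this
  continuous_toFun := stInv_continuous φ
  continuous_invFun := stInv_continuous φ.symm

lemma stMap_stHomeo : stMap (stHomeo φ) = φ := by
  refine DFunLike.ext _ _ fun A => ?_
  refine SetLike.coe_injective ?_
  rw [stMap_coe]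
  have himg : ⇑(stHomeo φ) '' (A : Set X) = ⇑(stHomeo φ).symm ⁻¹' (A : Set X) :=
    (stHomeo φ).toEquiv.image_eq_preimage_symm (A : Set X)
  rw [himg]
  ext y
  show stInv φ.symm y ∈ (A : Set X) ↔ y ∈ (φ A : Set X)
  have := stInv_mem_iff φ.symm y (φ A)
  rw [φ.symm_apply_apply] at this
  exact this

lemma stMap_surjective : Function.Surjective (stMap (X := X)) :=
  fun φ => ⟨stHomeo φ, stMap_stHomeo φ⟩

lemma stMap_injective : Function.Injective (stMap (X := X)) := by
  intro h g hhg
  ext x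
  refine eq_of_mem_clopens fun U => ?_
  set A : Clopens X := ⟨⇑h ⁻¹' (U : Set X), U.2.preimage h.continuous⟩ with hAdef
  have hcoe : (⇑h '' (A : Set X) : Set X) = ⇑g '' (A : Set X) := by
    have := congrArg (fun ψ : Clopens X ≃o Clopens X => ((ψ A : Clopens X) : Set X)) hhg
    simpa [stMap_coe] using this
  have hA : ⇑h '' (A : Set X) = (U : Set X) := Set.image_preimage_eq _ h.surjective
  constructor
  · intro hx
    have : x ∈ (A : Set X) := hx
    have : g x ∈ ⇑g '' (A : Set X) := Set.mem_image_of_mem _ this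
    rw [← hcoe, hA] at this
    exact this
  · intro hx
    have : g x ∈ ⇑g '' (A : Set X) := by rw [← hcoe, hA]; exact hx
    obtain ⟨x', hx', he⟩ := this
    have : x' = x := g.injective he
    exact this ▸ hx'

lemma stMap_continuous : Continuous (stMap (X := X)) := by
  rw [continuous_generateFrom_iff]
  rintro S ⟨a, b, rfl⟩
  have key : (stMap (X := X)) ⁻¹' {φ | φ a = b} =
      {h : X ≃ₜ X | ∀ x ∈ (a : Set X), h x ∈ (b : Set X)} ∩
      {h : X ≃ₜ X | ∀ x ∈ ((a : Set X))ᶜ, h x ∈ ((b : Set X))ᶜ} := by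
    ext h
    simp only [mem_preimage, mem_setOf_eq, mem_inter_iff]
    constructor
    · intro hab
      have hc : ⇑h '' (a : Set X) = (b : Set X) := by
        rw [← stMap_coe, hab]
      constructor
      · intro x hx
        rw [← hc]; exact Set.mem_image_of_mem _ hx
      · intro x hx hxb
        rw [← hc] at hxb
        obtain ⟨x', hx', he⟩ := hxb
        exact hx (h.injective he ▸ hx')
    · rintro ⟨h1, h2⟩
      refine SetLike.coe_injective ?_
      rw [stMap_coe]
      apply Set.Subset.antisymm
      · rintro y ⟨x, hx, rfl⟩; exact h1 x hx
      · intro y hy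
        rcases h.surjective y with ⟨x, rfl⟩
        by_cases hx : x ∈ (a : Set X)
        · exact Set.mem_image_of_mem _ hx
        · exact absurd hy (h2 x hx)
  rw [key]
  exact (isOpen_generateFrom_of_mem (g := {S : Set (X ≃ₜ X) | ∃ K U : Set X, IsCompact K ∧ IsOpen U ∧ S = {h : X ≃ₜ X | ∀ x ∈ K, h x ∈ U}})
      ⟨a, b, a.2.isClosed.isCompact, b.2.isOpen, rfl⟩).inter
    (isOpen_generateFrom_of_mem (g := {S : Set (X ≃ₜ X) | ∃ K U : Set X, IsCompact K ∧ IsOpen U ∧ S = {h : X ≃ₜ X | ∀ x ∈ K, h x ∈ U}})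
      ⟨(a : Set X)ᶜ, (b : Set X)ᶜ, (a.2.compl).isClosed.isCompact, (b.2.compl).isOpen, rfl⟩)

lemma exists_clopen_between {K V : Set X} (hK : IsCompact K) (hV : IsOpen V) (hKV : K ⊆ V) :
    ∃ C : Set X, IsClopen C ∧ K ⊆ C ∧ C ⊆ V := by
  choose! W hW hxW hWV using fun x (hx : x ∈ K) =>
    compact_exists_isClopen_in_isOpen hV (hKV hx)
  obtain ⟨t, ht⟩ := hK.elim_finite_subcover (fun x : K => W x)
    (fun x => (hW x x.2).isOpen) (fun x hx => Set.mem_iUnion.mpr ⟨⟨x, hx⟩, hxW x hx⟩)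
  refine ⟨⋃ i ∈ t, W i, isClopen_biUnion_finset fun i _ => hW i i.2, ht, ?_⟩
  exact Set.iUnion₂_subset fun i _ => hWV i i.2

lemma stMap_isOpenMap : IsOpenMap (stMap (X := X)) := by
  intro U hU
  have hU' : TopologicalSpace.GenerateOpen
      {S : Set (X ≃ₜ X) | ∃ K U : Set X, IsCompact K ∧ IsOpen U ∧
        S = {h : X ≃ₜ X | ∀ x ∈ K, h x ∈ U}} U := hU
  clear hU
  induction hU' with
  | basic s hs =>
    obtain ⟨K, V, hK, hV, rfl⟩ := hs
    rw [isOpen_iff_forall_mem_open]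
    rintro ψ ⟨h, hh, rfl⟩
    have hKV : ⇑h '' K ⊆ V := by rintro y ⟨x, hx, rfl⟩; exact hh x hx
    obtain ⟨C, hC, hs1, hs2⟩ := exists_clopen_between (hK.image h.continuous) hV hKV
    set A : Clopens X := ⟨⇑h ⁻¹' C, hC.preimage h.continuous⟩ with hAdef
    refine ⟨{ψ' : Clopens X ≃o Clopens X | ψ' A = (⟨C, hC⟩ : Clopens X)}, ?_, ?_, ?_⟩
    · intro ψ' hψ'
      obtain ⟨g, rfl⟩ := stMap_surjective ψ'
      refine ⟨g, fun x hx => ?_, rfl⟩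
      have he : stMap g A = (⟨C, hC⟩ : Clopens X) := hψ'
      have hgC : ⇑g '' (A : Set X) = C := by
        rw [← stMap_coe, he]
        rfl
      have hxA : x ∈ (A : Set X) := hs1 (Set.mem_image_of_mem _ hx)
      exact hs2 (hgC ▸ Set.mem_image_of_mem _ hxA)
    · exact isOpen_generateFrom_of_mem (g := {S : Set (Clopens X ≃o Clopens X) | ∃ a b : Clopens X, S = {φ : Clopens X ≃o Clopens X | φ a = b}}) ⟨A, ⟨C, hC⟩, rfl⟩
    · show stMap h A = ⟨C, hC⟩
      exact SetLike.coe_injective (by rw [stMap_coe]; exact Set.image_preimage_eq _ h.surjective)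
  | univ =>
    rw [Set.image_univ, Set.range_eq_univ.mpr stMap_surjective]
    exact isOpen_univ
  | inter s t _ _ ihs iht =>
    rw [Set.image_inter stMap_injective]; exact ihs.inter iht
  | sUnion S _ ih =>
    rw [Set.image_sUnion, Set.sUnion_image]; exact isOpen_biUnion ih

end Aux

/-- For a zero-dimensional compact Hausdorff space `X`, the map `h ↦ h^st` is a
homeomorphism from `H(X)` with the compact-open topology onto the automorphism
group of the Boolean algebra of clopen subsets of `X` with the topology of
pointwise convergence. -/
theorem stmt_4 (X : Type*) [TopologicalSpace X] [CompactSpace X] [T2Space X]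
    [TotallyDisconnectedSpace X] :
    IsHomeomorph (fun h : X ≃ₜ X => stMap h) :=
  ⟨stMap_continuous, stMap_isOpenMap, stMap_injective, stMap_surjective⟩
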